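/- Let S be a nonempty finite type, T ⊆ S a target set, ŝ ∈ S with ŝ ∉ T, and a ≤ b reals. Let P : ℝ → S → S → ℝ be such that: (i) for every s', the map x ↦ P x ŝ s' is affine; (ii) for every s ≠ ŝ and every s', P x s s' is constant in x; (iii) for every x ∈ [a, b] the matrix P x is stochastic; and (iv) for all s, s', either P x s s' = 0 for all x ∈ [a, b] or P x s s' > 0 for all x ∈ [a, b]. For x ∈ [a, b] let p(x) be the reachability-probability vector of (P x, T), assumed to exist. Then either for every state t the map x ↦ p(x) t is monotone on [a, b], or for every state t it is antitone on [a, b]; in particular, for every t and every x ∈ [a, b], p(x) t ≤ max (p(a) t) (p(b) t). -/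

import Mathlib

open Finset

/-- A stochastic matrix over a finite state space. -/
def IsStochastic {S : Type*} [Fintype S] (P : S → S → ℝ) : Prop :=
  (∀ s s', 0 ≤ P s s') ∧ ∀ s, ∑ s', P s s' = 1

/-- A solution of the reachability equation system for target set `T`. -/
def ReachSol {S : Type*} [Fintype S] (P : S → S → ℝ) (T : Set S) (q : S → ℝ) : Prop :=
  (∀ s, 0 ≤ q s) ∧ (∀ s ∈ T, q s = 1) ∧ ∀ s ∉ T, q s = ∑ s', P s s' * q s'

/-- `p` is the reachability-probability vector: the pointwise-least solution. -/
def IsReachVec {S : Type*} [Fintype S] (P : S → S → ℝ) (T : Set S) (p : S → ℝ) : Prop :=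
  ReachSol P T p ∧ ∀ q, ReachSol P T q → ∀ s, p s ≤ q s

/-- An affine real function. -/
def IsAffine (f : ℝ → ℝ) : Prop := ∃ c d : ℝ, ∀ x, f x = c * x + d

open Filter Topology in
lemma exists_least_reachSol {S : Type*} [Fintype S] (P : S → S → ℝ) (T : Set S)
    (hP : IsStochastic P) :
    ∃ p : S → ℝ, ReachSol P T p ∧
      ∀ q : S → ℝ, (∀ s, 0 ≤ q s) → (∀ s ∈ T, q s = 1) →
        (∀ s ∉ T, ∑ s', P s s' * q s' ≤ q s) → ∀ s, p s ≤ q s := by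
  classical
  set F : (S → ℝ) → (S → ℝ) := fun v s => if s ∈ T then 1 else ∑ s', P s s' * v s' with hF
  set Q : ℕ → S → ℝ := fun n => F^[n] (fun _ => 0) with hQ
  have hQsucc : ∀ n, Q (n + 1) = F (Q n) := fun n => Function.iterate_succ_apply' F n _
  have hFmono : ∀ v w : S → ℝ, (∀ s, v s ≤ w s) → ∀ s, F v s ≤ F w s := by
    intro v w hvw s
    simp only [hF]
    split
    · exact le_refl _
    · exact Finset.sum_le_sum fun s' _ => mul_le_mul_of_nonneg_left (hvw s') (hP.1 s s')
  have hnonneg : ∀ n s, 0 ≤ Q n s := by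
    intro n
    induction n with
    | zero => intro s; simp [hQ]
    | succ n ih =>
      intro s
      rw [hQsucc]
      simp only [hF]
      split
      · exact zero_le_one
      · exact Finset.sum_nonneg fun s' _ => mul_nonneg (hP.1 s s') (ih s')
  have hle1 : ∀ n s, Q n s ≤ 1 := by
    intro n
    induction n with
    | zero => intro s; simp [hQ]
    | succ n ih =>
      intro s
      rw [hQsucc]
      simp only [hF]
      split
      · exact le_refl 1
      · calc ∑ s', P s s' * Q n s' ≤ ∑ s', P s s' * 1 :=
              Finset.sum_le_sum fun s' _ => mul_le_mul_of_nonneg_left (ih s') (hP.1 s s')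
          _ = 1 := by simpa using hP.2 s
  have hmono : ∀ n s, Q n s ≤ Q (n + 1) s := by
    intro n
    induction n with
    | zero => intro s; simpa [hQ] using hnonneg 1 s
    | succ n ih =>
      intro s
      rw [hQsucc, hQsucc]
      exact hFmono _ _ ih s
  have hMs : ∀ s, Monotone fun n => Q n s := fun s =>
    monotone_nat_of_le_succ fun n => hmono n s
  have hbdd : ∀ s, BddAbove (Set.range fun n => Q n s) := by
    intro s
    refine ⟨1, ?_⟩
    rintro y ⟨n, rfl⟩
    exact hle1 n s
  set L : S → ℝ := fun s => ⨆ n, Q n s with hL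
  have htend : ∀ s, Tendsto (fun n => Q n s) atTop (𝓝 (L s)) := fun s =>
    tendsto_atTop_ciSup (hMs s) (hbdd s)
  have hLle : ∀ n s, Q n s ≤ L s := fun n s => le_ciSup (hbdd s) n
  refine ⟨L, ⟨?_, ?_, ?_⟩, ?_⟩
  · intro s
    exact le_trans (hnonneg 0 s) (hLle 0 s)
  · intro s hs
    refine le_antisymm (ciSup_le fun n => hle1 n s) ?_
    have h1 : Q 1 s = 1 := by rw [hQsucc]; simp [hF, hs]
    calc (1:ℝ) = Q 1 s := h1.symm
      _ ≤ L s := hLle 1 s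
  · intro s hs
    have h2 : Tendsto (fun n => Q (n + 1) s) atTop (𝓝 (L s)) :=
      (htend s).comp (tendsto_add_atTop_nat 1)
    have h3 : Tendsto (fun n => ∑ s', P s s' * Q n s') atTop (𝓝 (∑ s', P s s' * L s')) :=
      tendsto_finset_sum _ fun s' _ => (htend s').const_mul _
    have heq : (fun n => Q (n + 1) s) = fun n => ∑ s', P s s' * Q n s' := by
      funext n
      rw [hQsucc]
      simp [hF, hs]
    rw [heq] at h2
    exact tendsto_nhds_unique h2 h3
  · intro q h0 h1 h2
    have hQq : ∀ n s, Q n s ≤ q s := by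
      intro n
      induction n with
      | zero => intro s; simpa [hQ] using h0 s
      | succ n ih =>
        intro s
        rw [hQsucc]
        simp only [hF]
        by_cases hs : s ∈ T
        · simp [hs, h1 s hs]
        · simp only [if_neg hs]
          calc ∑ s', P s s' * Q n s' ≤ ∑ s', P s s' * q s' :=
                Finset.sum_le_sum fun s' _ => mul_le_mul_of_nonneg_left (ih s') (hP.1 s s')
            _ ≤ q s := h2 s hs
    exact fun s => ciSup_le fun n => hQq n s

/-- For a one-parameter Markov chain family whose transition probabilities
depend (affinely) on the parameter only at the single state `shat`, the reachability
probabilities are all monotone or all antitone in the parameter; in particular they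
are bounded by their values at the endpoints. -/
theorem single_state_parameter_monotone
    {S : Type*} [Fintype S] [Nonempty S]
    (T : Set S) (shat : S) (hshat : shat ∉ T)
    (a b : ℝ) (hab : a ≤ b)
    (P : ℝ → S → S → ℝ)
    (haff : ∀ s', IsAffine fun x => P x shat s')
    (hconst : ∀ s, s ≠ shat → ∀ s' x y, P x s s' = P y s s')
    (hstoch : ∀ x ∈ Set.Icc a b, IsStochastic (P x))
    (hpos : ∀ s s', (∀ x ∈ Set.Icc a b, P x s s' = 0) ∨ ∀ x ∈ Set.Icc a b, 0 < P x s s')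
    (p : ℝ → S → ℝ)
    (hp : ∀ x ∈ Set.Icc a b, IsReachVec (P x) T (p x)) :
    ((∀ t, MonotoneOn (fun x => p x t) (Set.Icc a b)) ∨
        ∀ t, AntitoneOn (fun x => p x t) (Set.Icc a b)) ∧
      ∀ t, ∀ x ∈ Set.Icc a b, p x t ≤ max (p a t) (p b t) := by
  classical
  have ha : a ∈ Set.Icc a b := ⟨le_refl a, hab⟩
  have hb : b ∈ Set.Icc a b := ⟨hab, le_refl b⟩
  -- the parameter-independent chain with shat and T absorbing
  set Qm : S → S → ℝ := fun s s' =>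
    if s = shat ∨ s ∈ T then (if s' = s then 1 else 0) else P a s s' with hQm
  have hQrow : ∀ s, (s = shat ∨ s ∈ T) → ∀ v : S → ℝ, ∑ s', Qm s s' * v s' = v s := by
    intro s hs v
    simp only [hQm, if_pos hs, ite_mul, one_mul, zero_mul]
    simp
  have hQrow' : ∀ s, s ≠ shat → s ∉ T → ∀ x s', Qm s s' = P x s s' := by
    intro s hs hsT x s'
    have hns : ¬(s = shat ∨ s ∈ T) := by tauto
    simp only [hQm]
    rw [if_neg hns]
    exact hconst s hs s' a x
  have hQstoch : IsStochastic Qm := by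
    constructor
    · intro s s'
      simp only [hQm]
      split
      · split <;> norm_num
      · exact (hstoch a ha).1 s s'
    · intro s
      simp only [hQm]
      split
      · simp
      · exact (hstoch a ha).2 s
  obtain ⟨g, hgsol, hgleast⟩ := exists_least_reachSol Qm T hQstoch
  obtain ⟨h, hhsol, hhleast⟩ := exists_least_reachSol Qm {shat} hQstoch
  have hg0 : ∀ s, 0 ≤ g s := hgsol.1
  have hh0 : ∀ s, 0 ≤ h s := hhsol.1
  have hh1 : h shat = 1 := hhsol.2.1 shat rfl
  have hh_le_one : ∀ t, h t ≤ 1 := by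
    intro t
    refine hhleast (fun _ => 1) (fun _ => zero_le_one) (fun _ _ => rfl) ?_ t
    intro s _
    simp only [mul_one]
    exact le_of_eq (hQstoch.2 s)
  have hhT : ∀ t ∈ T, h t = 0 := by
    intro t ht
    have hkey : ∀ s, h s ≤ (fun u => if u ∈ T then 0 else h u) s := by
      refine hhleast _ ?_ ?_ ?_
      · intro s; split
        · exact le_refl 0
        · exact hh0 s
      · intro s hs
        have : s ∉ T := by
          simp only [Set.mem_singleton_iff] at hs
          rw [hs]; exact hshat
        simp [this, hs, hhsol.2.1 s hs]
      · intro s hs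
        simp only [Set.mem_singleton_iff] at hs
        by_cases hsT : s ∈ T
        · rw [hQrow s (Or.inr hsT)]
        · simp only [if_neg hsT]
          calc ∑ s', Qm s s' * (if s' ∈ T then 0 else h s')
              ≤ ∑ s', Qm s s' * h s' := by
                refine Finset.sum_le_sum fun s' _ => mul_le_mul_of_nonneg_left ?_ (hQstoch.1 s s')
                split
                · exact hh0 s'
                · exact le_refl _
            _ = h s := (hhsol.2.2 s hs).symm
    have := hkey t
    simp only [if_pos ht] at this
    exact le_antisymm this (hh0 t)
  have hgshat : g shat = 0 := by
    have hkey : ∀ s, g s ≤ (fun u => if u = shat then 0 else g u) s := by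
      refine hgleast _ ?_ ?_ ?_
      · intro s; split
        · exact le_refl 0
        · exact hg0 s
      · intro s hs
        have : s ≠ shat := fun he => hshat (he ▸ hs)
        simp [this, hgsol.2.1 s hs]
      · intro s hs
        by_cases hse : s = shat
        · rw [hQrow s (Or.inl hse)]
        · simp only [if_neg hse]
          calc ∑ s', Qm s s' * (if s' = shat then 0 else g s')
              ≤ ∑ s', Qm s s' * g s' := by
                refine Finset.sum_le_sum fun s' _ => mul_le_mul_of_nonneg_left ?_ (hQstoch.1 s s')
                split
                · exact hg0 s'
                · exact le_refl _
            _ = g s := (hgsol.2.2 s hs).symm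
    have := hkey shat
    simp only [if_pos rfl] at this
    exact le_antisymm this (hg0 shat)
  -- comparison of p x with prefixed points
  have hple : ∀ x ∈ Set.Icc a b, ∀ q : S → ℝ, (∀ s, 0 ≤ q s) → (∀ s ∈ T, q s = 1) →
      (∀ s ∉ T, ∑ s', P x s s' * q s' ≤ q s) → ∀ s, p x s ≤ q s := by
    intro x hx q h0 h1 h2
    obtain ⟨p', hp'sol, hp'least⟩ := exists_least_reachSol (P x) T (hstoch x hx)
    intro s
    exact le_trans ((hp x hx).2 p' hp'sol s) (hp'least q h0 h1 h2 s)
  -- g ≤ p x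
  have hgle : ∀ x ∈ Set.Icc a b, ∀ t, g t ≤ p x t := by
    intro x hx t
    refine hgleast (p x) (hp x hx).1.1 (hp x hx).1.2.1 ?_ t
    intro s hs
    by_cases hse : s = shat
    · rw [hQrow s (Or.inl hse)]
    · rw [Finset.sum_congr rfl fun s' _ => by rw [hQrow' s hse hs x s']]
      exact le_of_eq ((hp x hx).1.2.2 s hs).symm
  -- h t * p x shat ≤ p x t
  have hscaled : ∀ x ∈ Set.Icc a b, ∀ t, h t * p x shat ≤ p x t := by
    intro x hx t
    by_cases hf0 : p x shat = 0
    · rw [hf0, mul_zero]; exact (hp x hx).1.1 t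
    · have hfpos : 0 < p x shat := lt_of_le_of_ne ((hp x hx).1.1 shat) (Ne.symm hf0)
      have hw : ∀ s, h s ≤ p x s / p x shat := by
        refine hhleast _ (fun s => div_nonneg ((hp x hx).1.1 s) hfpos.le) ?_ ?_
        · intro s hs
          simp only [Set.mem_singleton_iff] at hs
          rw [hs]
          exact div_self hf0
        · intro s hs
          simp only [Set.mem_singleton_iff] at hs
          by_cases hsT : s ∈ T
          · rw [hQrow s (Or.inr hsT)]
          · rw [Finset.sum_congr rfl fun s' _ => by rw [hQrow' s hs hsT x s']]
            rw [Finset.sum_congr rfl fun s' _ => (mul_div_assoc (P x s s') (p x s') (p x shat)).symm,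
              ← Finset.sum_div]
            rw [← (hp x hx).1.2.2 s hsT]
      calc h t * p x shat ≤ (p x t / p x shat) * p x shat :=
            mul_le_mul_of_nonneg_right (hw t) hfpos.le
        _ = p x t := div_mul_cancel₀ _ hf0
  -- decomposition
  have hdecomp : ∀ x ∈ Set.Icc a b, ∀ t, p x t = g t + h t * p x shat := by
    intro x hx t
    have hge : ∀ t, g t + h t * p x shat ≤ p x t := by
      have hv : ∀ s, g s ≤ p x s - h s * p x shat := by
        refine hgleast _ (fun s => sub_nonneg.2 (hscaled x hx s)) ?_ ?_
        · intro s hs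
          rw [(hp x hx).1.2.1 s hs, hhT s hs]
          ring
        · intro s hs
          by_cases hse : s = shat
          · rw [hQrow s (Or.inl hse)]
          · have e1 : ∑ s', Qm s s' * (p x s' - h s' * p x shat)
                = (∑ s', Qm s s' * p x s') - (∑ s', Qm s s' * h s') * p x shat := by
              rw [Finset.sum_mul, ← Finset.sum_sub_distrib]
              exact Finset.sum_congr rfl fun s' _ => by ring
            rw [e1]
            have e2 : ∑ s', Qm s s' * p x s' = p x s := by
              rw [Finset.sum_congr rfl fun s' _ => by rw [hQrow' s hse hs x s']]
              exact ((hp x hx).1.2.2 s hs).symm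
            have e3 : ∑ s', Qm s s' * h s' = h s := (hhsol.2.2 s hse).symm
            rw [e2, e3]
      intro t
      have := hv t
      linarith
    refine le_antisymm ?_ (hge t)
    refine hple x hx (fun u => g u + h u * p x shat)
      (fun s => add_nonneg (hg0 s) (mul_nonneg (hh0 s) ((hp x hx).1.1 shat))) ?_ ?_ t
    · intro s hs
      show g s + h s * p x shat = 1
      rw [hgsol.2.1 s hs, hhT s hs]
      ring
    · intro s hs
      show ∑ s', P x s s' * (g s' + h s' * p x shat) ≤ g s + h s * p x shat
      by_cases hse : s = shat
      · calc ∑ s', P x s s' * (g s' + h s' * p x shat)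
            ≤ ∑ s', P x s s' * p x s' :=
              Finset.sum_le_sum fun s' _ =>
                mul_le_mul_of_nonneg_left (hge s') ((hstoch x hx).1 s s')
          _ = p x s := ((hp x hx).1.2.2 s hs).symm
          _ = g s + h s * p x shat := by rw [hse, hgshat, hh1]; ring
      · have e0 : ∑ s', P x s s' * (g s' + h s' * p x shat)
            = ∑ s', Qm s s' * (g s' + h s' * p x shat) :=
          Finset.sum_congr rfl fun s' _ => by rw [hQrow' s hse hs x s']
        have e1 : ∑ s', Qm s s' * (g s' + h s' * p x shat)
            = (∑ s', Qm s s' * g s') + (∑ s', Qm s s' * h s') * p x shat := by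
          rw [Finset.sum_mul, ← Finset.sum_add_distrib]
          exact Finset.sum_congr rfl fun s' _ => by ring
        rw [e0, e1, ← hgsol.2.2 s hs, ← hhsol.2.2 s hse]
  -- affine data of the shat-row dotted with g and h
  set G : ℝ → ℝ := fun x => ∑ s', P x shat s' * g s' with hGdef
  set H : ℝ → ℝ := fun x => ∑ s', P x shat s' * h s' with hHdef
  have hfeq : ∀ x ∈ Set.Icc a b, p x shat * (1 - H x) = G x := by
    intro x hx
    have e : p x shat = ∑ s', P x shat s' * (g s' + h s' * p x shat) := by
      calc p x shat = ∑ s', P x shat s' * p x s' := (hp x hx).1.2.2 shat hshat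
        _ = _ := Finset.sum_congr rfl fun s' _ => by rw [hdecomp x hx s']
    have e2 : ∑ s', P x shat s' * (g s' + h s' * p x shat) = G x + H x * p x shat := by
      simp only [hGdef, hHdef]
      rw [Finset.sum_mul, ← Finset.sum_add_distrib]
      exact Finset.sum_congr rfl fun s' _ => by ring
    have e3 : p x shat = G x + H x * p x shat := e.trans e2
    linear_combination e3
  have hHle1 : ∀ x ∈ Set.Icc a b, H x ≤ 1 := by
    intro x hx
    calc H x ≤ ∑ s', P x shat s' * 1 :=
          Finset.sum_le_sum fun s' _ =>
            mul_le_mul_of_nonneg_left (hh_le_one s') ((hstoch x hx).1 shat s')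
      _ = 1 := by simpa using (hstoch x hx).2 shat
  have hsubdist : ∀ x, ∑ s', P x shat s' * (1 - h s') = (∑ s', P x shat s') - H x := by
    intro x
    simp only [hHdef]
    rw [← Finset.sum_sub_distrib]
    exact Finset.sum_congr rfl fun s' _ => by ring
  by_cases hex : ∃ x₀ ∈ Set.Icc a b, H x₀ = 1
  · -- degenerate case: p is constant in the parameter
    obtain ⟨x₀, hx₀, hH1⟩ := hex
    have hterm : ∀ s', P x₀ shat s' * (1 - h s') = 0 := by
      have hsum : ∑ s', P x₀ shat s' * (1 - h s') = 0 := by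
        rw [hsubdist x₀, (hstoch x₀ hx₀).2 shat, hH1]; ring
      intro s'
      exact (Finset.sum_eq_zero_iff_of_nonneg fun s'' _ =>
        mul_nonneg ((hstoch x₀ hx₀).1 shat s'') (sub_nonneg.2 (hh_le_one s''))).mp
        hsum s' (Finset.mem_univ s')
    have hHall : ∀ x ∈ Set.Icc a b, H x = 1 := by
      intro x hx
      have hsum : ∑ s', P x shat s' * (1 - h s') = 0 := by
        refine Finset.sum_eq_zero fun s' _ => ?_
        rcases hpos shat s' with hz | hpp
        · rw [hz x hx]; ring
        · have h1 : 1 - h s' = 0 := by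
            rcases mul_eq_zero.mp (hterm s') with hc | hc
            · exact absurd hc (ne_of_gt (hpp x₀ hx₀))
            · exact hc
          rw [h1, mul_zero]
      rw [hsubdist x, (hstoch x hx).2 shat] at hsum
      linarith
    have hconstp : ∀ x ∈ Set.Icc a b, ∀ t, p x t = g t := by
      intro x hx t
      refine le_antisymm ?_ (hgle x hx t)
      have hGx : G x = 0 := by
        have := hfeq x hx
        rw [hHall x hx] at this
        linarith
      simp only [hGdef] at hGx
      refine (hp x hx).2 g ⟨hg0, hgsol.2.1, ?_⟩ t
      intro s hs
      by_cases hse : s = shat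
      · rw [hse, hgshat]
        exact hGx.symm
      · rw [Finset.sum_congr rfl fun s' _ => by rw [← hQrow' s hse hs x s']]
        exact hgsol.2.2 s hs
    constructor
    · left
      intro t x hx y hy _
      simp only
      rw [hconstp x hx t, hconstp y hy t]
    · intro t x hx
      rw [hconstp x hx t, hconstp a ha t]
      exact le_max_left _ _
  · -- nondegenerate case: Möbius analysis
    push_neg at hex
    have hD : ∀ x ∈ Set.Icc a b, 0 < 1 - H x := fun x hx =>
      sub_pos.2 (lt_of_le_of_ne (hHle1 x hx) (hex x hx))
    choose c d hc using haff
    set cG := ∑ s', c s' * g s' with hcG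
    set dG := ∑ s', d s' * g s' with hdG
    set cH := ∑ s', c s' * h s' with hcH
    set dH := ∑ s', d s' * h s' with hdH
    have hGaff : ∀ x, G x = cG * x + dG := by
      intro x
      simp only [hGdef, hcG, hdG]
      rw [Finset.sum_mul, ← Finset.sum_add_distrib]
      refine Finset.sum_congr rfl fun s' _ => ?_
      have := hc s' x
      simp only at this
      rw [this]; ring
    have hHaff : ∀ x, H x = cH * x + dH := by
      intro x
      simp only [hHdef, hcH, hdH]
      rw [Finset.sum_mul, ← Finset.sum_add_distrib]
      refine Finset.sum_congr rfl fun s' _ => ?_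
      have := hc s' x
      simp only at this
      rw [this]; ring
    set Δ := cG * (1 - dH) + dG * cH with hΔdef
    have key : ∀ x ∈ Set.Icc a b, ∀ y ∈ Set.Icc a b,
        (p y shat - p x shat) * ((1 - H x) * (1 - H y)) = (y - x) * Δ := by
      intro x hx y hy
      have e1 := hfeq x hx
      have e2 := hfeq y hy
      rw [hGaff, hHaff] at e1 e2
      rw [hHaff x, hHaff y, hΔdef]
      linear_combination (1 - (cH * x + dH)) * e2 - (1 - (cH * y + dH)) * e1
    have hfm : ∀ x ∈ Set.Icc a b, ∀ y ∈ Set.Icc a b, x ≤ y → 0 ≤ Δ →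
        p x shat ≤ p y shat := by
      intro x hx y hy hxy hΔ
      have hk := key x hx y hy
      have hpos2 := mul_pos (hD x hx) (hD y hy)
      have hnn : 0 ≤ (p y shat - p x shat) * ((1 - H x) * (1 - H y)) := by
        rw [hk]; exact mul_nonneg (sub_nonneg.2 hxy) hΔ
      nlinarith
    have hfa : ∀ x ∈ Set.Icc a b, ∀ y ∈ Set.Icc a b, x ≤ y → Δ ≤ 0 →
        p y shat ≤ p x shat := by
      intro x hx y hy hxy hΔ
      have hk := key x hx y hy
      have hpos2 := mul_pos (hD x hx) (hD y hy)
      have hnn : (p y shat - p x shat) * ((1 - H x) * (1 - H y)) ≤ 0 := by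
        rw [hk]; exact mul_nonpos_of_nonneg_of_nonpos (sub_nonneg.2 hxy) hΔ
      nlinarith
    rcases le_total 0 Δ with hΔ | hΔ
    · have hmono : ∀ t, MonotoneOn (fun x => p x t) (Set.Icc a b) := by
        intro t x hx y hy hxy
        simp only
        rw [hdecomp x hx t, hdecomp y hy t]
        exact add_le_add_right
          (mul_le_mul_of_nonneg_left (hfm x hx y hy hxy hΔ) (hh0 t)) _
      refine ⟨Or.inl hmono, fun t x hx => ?_⟩
      exact le_trans (hmono t hx hb hx.2) (le_max_right _ _)
    · have hanti : ∀ t, AntitoneOn (fun x => p x t) (Set.Icc a b) := by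
        intro t x hx y hy hxy
        simp only
        rw [hdecomp x hx t, hdecomp y hy t]
        exact add_le_add_right
          (mul_le_mul_of_nonneg_left (hfa x hx y hy hxy hΔ) (hh0 t)) _
      refine ⟨Or.inr hanti, fun t x hx => ?_⟩
      exact le_trans (hanti t ha hx hx.1) (le_max_left _ _)
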